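/- The set of Morse-type minimal points is dense in the full binary shift: the set {x : ℕ → Bool | closure {σ^[k] x | k : ℕ} is minimal and uncountable} is dense in ℕ → Bool with the product topology. -/

import Mathlib

def pdg : ℕ → Bool
  | j =>
    if h : j % 2 = 0 then true
    else !pdg (j / 2)
decreasing_by
  exact Nat.div_lt_self (by omega) one_lt_two

lemma pdg_even (s : ℕ) : pdg (2 * s) = true := by
  rw [pdg]; simp [Nat.mul_mod_right]

lemma pdg_odd (s : ℕ) : pdg (2 * s + 1) = !pdg s := by
  rw [pdg]
  have h : (2 * s + 1) % 2 = 1 := by omega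
  simp [h]
  congr 1
  omega

/-- self-similarity: pdg is constant along arithmetic progressions of step 2^k
on the first 2^k - 1 terms -/
lemma pdg_rec : ∀ k t j, t < 2 ^ k - 1 → pdg (t + j * 2 ^ k) = pdg t := by
  intro k
  induction k with
  | zero => intro t j ht; simp at ht
  | succ k ih =>
    intro t j ht
    have h2 : (2:ℕ) ^ (k+1) = 2 * 2 ^ k := by ring
    rcases Nat.even_or_odd t with ⟨s, hs⟩ | ⟨s, hs⟩
    · have hs2 : t = 2 * s := by omega
      have e : t + j * 2 ^ (k+1) = 2 * (s + j * 2 ^ k) := by rw [hs2]; ring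
      rw [e, hs2, pdg_even, pdg_even]
    · have hsk : s < 2 ^ k - 1 := by
        have : (2:ℕ) ^ (k+1) = 2 * 2 ^ k := by ring
        have h1 : (1:ℕ) ≤ 2 ^ k := Nat.one_le_two_pow
        omega
      have e : t + j * 2 ^ (k+1) = 2 * (s + j * 2 ^ k) + 1 := by subst hs; ring
      rw [e, pdg_odd, hs, pdg_odd, ih s j hsk]

lemma pdg_aper : ∀ p, 0 < p → ¬ ∀ j, pdg (j + p) = pdg j := by
  intro p
  induction p using Nat.strong_induction_on with
  | _ p ih =>
    intro hp h
    rcases Nat.even_or_odd p with ⟨q, hq⟩ | ⟨q, hq⟩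
    · -- p = 2q
      have hq1 : 0 < q := by omega
      refine ih q (by omega) hq1 fun j => ?_
      have := h (2 * j + 1)
      have e : 2 * j + 1 + p = 2 * (j + q) + 1 := by omega
      rw [e, pdg_odd, pdg_odd] at this
      simpa using this
    · -- p = 2q + 1
      have h1 : ∀ j, pdg (j + q) = false := by
        intro j
        have := h (2 * j)
        have e : 2 * j + p = 2 * (j + q) + 1 := by omega
        rw [e, pdg_odd, pdg_even] at this
        simpa using this
      have := h1 q
      rw [show q + q = 2 * q by ring, pdg_even] at this
      simp at this

/-- the Toeplitz-like point with prescribed prefix `w` of length `n` -/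
def pt (w : ℕ → Bool) (n : ℕ) : ℕ → Bool := fun m =>
  if m % (n + 1) < n then w (m % (n + 1)) else pdg (m / (n + 1))

lemma pt_prefix (w : ℕ → Bool) (n : ℕ) {i : ℕ} (hi : i < n) : pt w n i = w i := by
  have h : i % (n + 1) = i := Nat.mod_eq_of_lt (by omega)
  simp [pt, h, hi]

/-- structure lemma: `pt w n` repeats its prefix of length `2^k * (n+1) - 1`
along every multiple of `2^k * (n+1)`. -/
lemma pt_rec (w : ℕ → Bool) (n : ℕ) (k : ℕ) :
    ∀ i j, i < 2 ^ k * (n + 1) - 1 → pt w n (i + j * (2 ^ k * (n + 1))) = pt w n i := by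
  intro i j hi
  set L := n + 1 with hL
  have hmod : (i + j * (2 ^ k * L)) % L = i % L := by
    conv_lhs => rw [show j * (2 ^ k * L) = j * 2 ^ k * L by ring]
    rw [Nat.add_mul_mod_self_right]
  have hdiv : (i + j * (2 ^ k * L)) / L = i / L + j * 2 ^ k := by
    rw [show i + j * (2 ^ k * L) = i + (j * 2 ^ k) * L by ring]
    rw [Nat.add_mul_div_right _ _ (by omega : 0 < L)]
  by_cases hc : i % L < n
  · simp only [pt, ← hL, hmod, hc, if_pos]
  · have hgap : i % L = n := by
      have := Nat.mod_lt i (show 0 < L by omega)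
      omega
    have hq : i / L < 2 ^ k - 1 := by
      have hd := Nat.div_add_mod i L
      have h1 : (1:ℕ) ≤ 2 ^ k := Nat.one_le_two_pow
      rcases Nat.lt_or_ge (i / L) (2 ^ k - 1) with h | h
      · exact h
      · exfalso
        have h3 : L * (2 ^ k - 1) ≤ L * (i / L) := Nat.mul_le_mul_left L h
        have h2 : L * (2 ^ k - 1) = L * 2 ^ k - L := by
          rw [Nat.mul_sub]; omega
        have h4 : (2:ℕ) ^ k * L = L * 2 ^ k := Nat.mul_comm _ _
        omega
    simp only [pt, ← hL, hmod, hdiv, hc, if_neg]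
    exact pdg_rec k (i / L) j hq

/-- `pt w n` is not eventually periodic. -/
lemma pt_not_evper (w : ℕ → Bool) (n : ℕ) (r p : ℕ) (hp : 0 < p) :
    ¬ ∀ m, r ≤ m → pt w n (m + p) = pt w n m := by
  intro h
  set L := n + 1 with hL
  -- x is eventually (L*p)-periodic, hence pdg eventually p-periodic
  have hx : ∀ t, 0 < t → ∀ m, r ≤ m → pt w n (m + t * p) = pt w n m := by
    intro t ht
    induction t with
    | zero => omega
    | succ t ih =>
      intro m hm
      rcases Nat.eq_zero_or_pos t with rfl | ht'
      · simpa using h m hm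
      · have := h (m + t * p) (by omega)
        have e : m + (t+1) * p = m + t * p + p := by ring
        rw [e, this, ih ht' m hm]
  have hg : ∀ j, r ≤ j → pdg (j + p) = pdg j := by
    intro j hj
    have h1 := hx L (by omega) (L - 1 + L * j) (by
      have : j ≤ L * j := Nat.le_mul_of_pos_left j (by omega)
      omega)
    have e1 : L - 1 + L * j + L * p = L - 1 + L * (j + p) := by
      rw [Nat.mul_add]; ring
    rw [e1] at h1
    have key : ∀ u, pt w n (L - 1 + L * u) = pdg u := by
      intro u
      have hm : (L - 1 + L * u) % L = L - 1 := by
        rw [Nat.add_mul_mod_self_left, Nat.mod_eq_of_lt (by omega)]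
      have hd : (L - 1 + L * u) / L = u := by
        rw [Nat.add_mul_div_left _ _ (by omega : 0 < L),
          Nat.div_eq_of_lt (by omega)]
        omega
      simp only [pt, ← hL, hm, hd]
      rw [if_neg (by omega)]
    rw [key, key] at h1
    exact h1
  -- upgrade to full periodicity of pdg
  have hfull : ∀ j, pdg (j + p) = pdg j := by
    intro j
    obtain ⟨k, hk⟩ : ∃ k, j + p < 2 ^ k - 1 := by
      refine ⟨j + p + 2, ?_⟩
      have := Nat.lt_two_pow_self (n := j + p + 2)
      have h1 : j + p + 2 < 2 ^ (j + p + 2) := this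
      omega
    obtain ⟨s, hs⟩ : ∃ s, r ≤ j + s * 2 ^ k := ⟨r, by
      have h1 : (1:ℕ) ≤ 2 ^ k := Nat.one_le_two_pow
      have : r ≤ r * 2 ^ k := Nat.le_mul_of_pos_right r (by omega)
      omega⟩
    calc pdg (j + p) = pdg (j + p + s * 2 ^ k) := (pdg_rec k (j+p) s (by omega)).symm
      _ = pdg (j + s * 2 ^ k + p) := by ring_nf
      _ = pdg (j + s * 2 ^ k) := hg _ hs
      _ = pdg j := pdg_rec k j s (by omega)
  exact pdg_aper p hp hfull

open TopologicalSpace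

lemma mem_closure_iff_cyl {S : Set (ℕ → Bool)} {y : ℕ → Bool} :
    y ∈ closure S ↔ ∀ M : ℕ, ∃ z ∈ S, ∀ i < M, z i = y i := by
  rw [(PiNat.isTopologicalBasis_cylinders (fun _ : ℕ => Bool)).mem_closure_iff]
  constructor
  · intro h M
    obtain ⟨z, hz1, hz2⟩ := h (PiNat.cylinder y M) ⟨y, M, rfl⟩ (PiNat.self_mem_cylinder y M)
    exact ⟨z, hz2, hz1⟩
  · rintro h o ⟨c, M, rfl⟩ hy
    obtain ⟨z, hzS, hz⟩ := h M
    exact ⟨z, fun i hi => (hz i hi).trans (hy i hi), hzS⟩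

/-- The shift map on the one-sided binary full shift. -/
def shift (x : ℕ → Bool) : ℕ → Bool := fun n => x (n + 1)

lemma shift_iter (x : ℕ → Bool) (m i : ℕ) : (shift^[m] x) i = x (i + m) := by
  induction m generalizing i with
  | zero => rfl
  | succ m ih =>
    rw [Function.iterate_succ_apply']
    show (shift^[m] x) (i + 1) = x (i + (m + 1))
    rw [ih]
    congr 1
    omega

/-- The set of Morse-type minimal points (points whose orbit closure under
the shift map is minimal and uncountable) is dense in `ℕ → Bool`. -/
theorem morseTypeMinimal_dense :
    Dense {x : ℕ → Bool |
      (∀ K : Set (ℕ → Bool),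
          K ⊆ closure {y : ℕ → Bool | ∃ k : ℕ, shift^[k] x = y} →
          K.Nonempty → IsClosed K → shift '' K ⊆ K →
          K = closure {y : ℕ → Bool | ∃ k : ℕ, shift^[k] x = y}) ∧
      ¬ (closure {y : ℕ → Bool | ∃ k : ℕ, shift^[k] x = y}).Countable} := by
  rw [(PiNat.isTopologicalBasis_cylinders (fun _ : ℕ => Bool)).dense_iff]
  rintro o ⟨w, n, rfl⟩ -
  set x := pt w n with hx
  have hxcyl : x ∈ PiNat.cylinder w n := fun i hi => pt_prefix w n hi
  set Sorb : Set (ℕ → Bool) := {y | ∃ k, shift^[k] x = y} with hSorb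
  have horb : ∀ m, shift^[m] x ∈ Sorb := fun m => ⟨m, rfl⟩
  have hLpos : ∀ k : ℕ, 0 < 2 ^ k * (n + 1) := fun k =>
    Nat.mul_pos (Nat.two_pow_pos k) (by omega)
  -- key approximation: any y in the orbit closure has, for each k, an iterate
  -- (in any invariant set containing y) agreeing with x on 2^k*(n+1)-1 coords.
  refine ⟨x, hxcyl, ?_, ?_⟩
  · -- minimality
    intro K hKsub hKne hKcl hKinv
    have hKit : ∀ m z, z ∈ K → shift^[m] z ∈ K := by
      intro m
      induction m with
      | zero => intro z hz; exact hz
      | succ m ih =>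
        intro z hz
        rw [Function.iterate_succ_apply']
        exact hKinv ⟨_, ih z hz, rfl⟩
    obtain ⟨y, hy⟩ := hKne
    have hxK : x ∈ K := by
      rw [← hKcl.closure_eq, mem_closure_iff_cyl]
      intro M
      set Lk := 2 ^ M * (n + 1) with hLk
      have hML : M + 1 ≤ Lk := by
        have h1 : M < 2 ^ M := Nat.lt_two_pow_self (n := M)
        have h2 : 2 ^ M ≤ Lk := Nat.le_mul_of_pos_right _ (by omega)
        omega
      have hyX := hKsub hy
      rw [mem_closure_iff_cyl] at hyX
      obtain ⟨z, ⟨r, rfl⟩, hz⟩ := hyX (2 * Lk)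
      set d := r / Lk with hd
      set ρ := r % Lk with hρ
      have hdm : Lk * d + ρ = r := Nat.div_add_mod r Lk
      have hρlt : ρ < Lk := Nat.mod_lt r (hLpos M)
      set m := Lk - ρ with hm
      have hrm : r + m = (d + 1) * Lk := by
        have : (d + 1) * Lk = Lk * d + Lk := by ring
        omega
      refine ⟨shift^[m] y, hKit m y hy, ?_⟩
      intro i hi
      rw [shift_iter]
      have him : i + m < 2 * Lk := by omega
      rw [← hz (i + m) him, shift_iter]
      have e : i + m + r = i + (d + 1) * Lk := by omega
      rw [e]
      exact pt_rec w n M i (d + 1) (by omega)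
    apply Set.Subset.antisymm hKsub
    rw [← hKcl.closure_eq]
    apply closure_mono
    rintro _ ⟨k, rfl⟩
    exact hKit k x hxK
  · -- uncountability
    intro hcount
    have hperf : Preperfect (closure Sorb) := by
      intro z hz
      rw [accPt_iff_nhds]
      intro U hU
      obtain ⟨o, ⟨c, M, rfl⟩, hzo, hoU⟩ :=
        (PiNat.isTopologicalBasis_cylinders (fun _ : ℕ => Bool)).mem_nhds_iff.mp hU
      obtain ⟨z', ⟨r, rfl⟩, hz'⟩ := mem_closure_iff_cyl.mp hz (M)
      set k := r + M + 1 with hk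
      set Lk := 2 ^ k * (n + 1) with hLk
      have hML : r + M + 2 ≤ Lk := by
        have h1 : k < 2 ^ k := Nat.lt_two_pow_self (n := k)
        have h2 : 2 ^ k ≤ Lk := Nat.le_mul_of_pos_right _ (by omega)
        omega
      have hys : ∀ s, ∀ i < M, (shift^[r + s * Lk] x) i = shift^[r] x i := by
        intro s i hi
        rw [shift_iter, shift_iter]
        have e : i + (r + s * Lk) = (i + r) + s * Lk := by omega
        rw [e]
        exact pt_rec w n k (i + r) s (by omega)
      by_cases hall : ∀ s, shift^[r + s * Lk] x = z
      · exfalso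
        apply pt_not_evper w n r Lk (hLpos k)
        intro mm hmm
        set s := (mm - r) / Lk with hs
        set i := (mm - r) % Lk with hi
        have hdm : Lk * s + i = mm - r := Nat.div_add_mod _ _
        have hilt : i < Lk := Nat.mod_lt _ (hLpos k)
        have h1 : x (mm + Lk) = z i := by
          have h := congrFun (hall (s + 1)) i
          rw [shift_iter] at h
          rw [← h]
          congr 1
          have e1 : (s + 1) * Lk = Lk * s + Lk := by ring
          omega
        have h2 : x mm = z i := by
          have := congrFun (hall s) i
          rw [shift_iter] at this
          rw [← this]
          congr 1
          have e2 : s * Lk = Lk * s := Nat.mul_comm _ _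
          omega
        show x (mm + Lk) = x mm
        rw [h1, h2]
      · push_neg at hall
        obtain ⟨s, hs⟩ := hall
        refine ⟨shift^[r + s * Lk] x, ⟨?_, subset_closure (horb _)⟩, hs⟩
        apply hoU
        intro i hi
        rw [hys s i hi, ← hzo i hi]
        exact hz' i hi
    letI : MetricSpace (ℕ → Bool) := PiNat.metricSpace
    haveI : @CompleteSpace (ℕ → Bool) PseudoMetricSpace.toUniformSpace :=
      PiNat.completeSpace
    have hperf' : Perfect (closure Sorb) := ⟨isClosed_closure, hperf⟩
    obtain ⟨f, hfC, -, hfinj⟩ :=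
      hperf'.exists_nat_bool_injection ⟨x, subset_closure (horb 0)⟩
    have hcnt : Countable (ℕ → Bool) := by
      have h1 : (Set.range f).Countable := hcount.mono hfC
      have h2 := h1.to_subtype
      exact (Equiv.ofInjective f hfinj).countable_iff.mpr h2
    obtain ⟨g, hgsurj⟩ := exists_surjective_nat (ℕ → Bool)
    obtain ⟨m, hm⟩ := hgsurj (fun j => !(g j j))
    have := congrFun hm m
    simp at this
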